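/- The language L_2lin = { a^{2n} b^{2n} : n ≥ 1 } over the alphabet {a,b} is accepted by a repetitive deterministic finite automaton with translucent words (RDFAwtw). -/

import Mathlib

/-! Repetitive (non)deterministic finite automata with translucent words. -/

/-- Behavior of the automaton at the end-of-tape marker: halt accepting,
halt rejecting, or (in the repetitive case) continue in one of a set of states. -/
inductive EndBehavior (Q : Type) : Type where
  | accept : EndBehavior Q
  | reject : EndBehavior Q
  | cont : Set Q → EndBehavior Q

/-- `InStar S w` means `w` belongs to the Kleene star `S*` of the set of words `S`. -/
def InStar {α : Type} (S : Set (List α)) (w : List α) : Prop :=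
  ∃ l : List (List α), (∀ u ∈ l, u ∈ S) ∧ l.flatten = w

/-- A (repetitive) nondeterministic finite automaton with translucent words,
with state set `Q` over the alphabet `α`.  `tl q` is the set `τ(q)` of
translucent words of the state `q`, `delta` is the transition function and
`endB q` is the behavior at the end-of-tape marker.  The fields `tl_fin`,
`code_ne`, `prefix_code` and `tl_head` express that each `τ(q)` is finite,
that `τ(q) ∪ Σ_q` is a prefix code (no empty word, and no member is a proper
prefix of another member), and that no word of `τ(q)` begins with a letter
readable in `q`. -/
structure RNFAwtw (α : Type) (Q : Type) : Type where
  init : Set Q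
  tl : Q → Set (List α)
  delta : Q → α → Set Q
  endB : Q → EndBehavior Q
  tl_fin : ∀ q, (tl q).Finite
  code_ne : ∀ q, [] ∉ tl q
  prefix_code : ∀ q,
    ∀ u ∈ tl q ∪ {w | ∃ a, (delta q a).Nonempty ∧ w = [a]},
    ∀ v ∈ tl q ∪ {w | ∃ a, (delta q a).Nonempty ∧ w = [a]},
      u <+: v → u = v
  tl_head : ∀ q, ∀ t ∈ tl q, ∀ a, (delta q a).Nonempty → ¬ [a] <+: t

/-- Configurations: a pair of a state and the remaining tape content, or one
of the two halting configurations. -/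
inductive Conf (α Q : Type) : Type where
  | state : Q → List α → Conf α Q
  | accept : Conf α Q
  | reject : Conf α Q

/-- The single-step computation relation of an RNFAwtw. -/
inductive RNFAwtw.Step {α Q : Type} (A : RNFAwtw α Q) :
    Conf α Q → Conf α Q → Prop where
  | read {q q' : Q} {a : α} {u v : List α} :
      InStar (A.tl q) u → q' ∈ A.delta q a →
      RNFAwtw.Step A (Conf.state q (u ++ a :: v)) (Conf.state q' (u ++ v))
  | stuck {q : Q} {a : α} {u v : List α} :
      InStar (A.tl q) u → A.delta q a = ∅ →
      (∀ t ∈ A.tl q, ¬ t <+: (a :: v)) →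
      RNFAwtw.Step A (Conf.state q (u ++ a :: v)) Conf.reject
  | haltAccept {q : Q} {w : List α} :
      InStar (A.tl q) w → A.endB q = EndBehavior.accept →
      RNFAwtw.Step A (Conf.state q w) Conf.accept
  | haltReject {q : Q} {w : List α} :
      InStar (A.tl q) w → A.endB q = EndBehavior.reject →
      RNFAwtw.Step A (Conf.state q w) Conf.reject
  | goOn {q q' : Q} {w : List α} {S : Set Q} :
      InStar (A.tl q) w → A.endB q = EndBehavior.cont S → q' ∈ S →
      RNFAwtw.Step A (Conf.state q w) (Conf.state q' w)

/-- `A` accepts the word `w`. -/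
def RNFAwtw.Accepts {α Q : Type} (A : RNFAwtw α Q) (w : List α) : Prop :=
  ∃ q0 ∈ A.init, Relation.ReflTransGen A.Step (Conf.state q0 w) Conf.accept

/-- The language accepted by `A`. -/
def RNFAwtw.lang {α Q : Type} (A : RNFAwtw α Q) : Set (List α) :=
  { w | A.Accepts w }

/-- `A` is deterministic: one initial state, at most one transition per
state/letter pair, and at the end-of-tape marker the continuation (if any)
is a single state. -/
def RNFAwtw.Deterministic {α Q : Type} (A : RNFAwtw α Q) : Prop :=
  (∃ q0, A.init = {q0}) ∧
  (∀ q a, (A.delta q a).Subsingleton) ∧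
  (∀ q S, A.endB q = EndBehavior.cont S → ∃ q', S = {q'})

/-- `A` is non-repetitive: at the end-of-tape marker it always halts. -/
def RNFAwtw.NonRepetitive {α Q : Type} (A : RNFAwtw α Q) : Prop :=
  ∀ q S, A.endB q ≠ EndBehavior.cont S

/-- `L` is accepted by some repetitive NFAwtw (with a finite state set). -/
def AcceptedByRNFAwtw {α : Type} (L : Set (List α)) : Prop :=
  ∃ (Q : Type) (_ : Finite Q) (A : RNFAwtw α Q), A.lang = L

/-- `L` is accepted by some repetitive DFAwtw. -/
def AcceptedByRDFAwtw {α : Type} (L : Set (List α)) : Prop :=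
  ∃ (Q : Type) (_ : Finite Q) (A : RNFAwtw α Q), A.Deterministic ∧ A.lang = L

/-- `L` is accepted by some (non-repetitive) NFAwtw. -/
def AcceptedByNFAwtw {α : Type} (L : Set (List α)) : Prop :=
  ∃ (Q : Type) (_ : Finite Q) (A : RNFAwtw α Q), A.NonRepetitive ∧ A.lang = L

/-- `L` is accepted by some (non-repetitive) DFAwtw. -/
def AcceptedByDFAwtw {α : Type} (L : Set (List α)) : Prop :=
  ∃ (Q : Type) (_ : Finite Q) (A : RNFAwtw α Q),
    A.NonRepetitive ∧ A.Deterministic ∧ A.lang = L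

/-- The two-letter alphabet `{a, b}`. -/
inductive Letter : Type where
  | a : Letter
  | b : Letter
deriving DecidableEq

instance : Fintype Letter where
  elems := {Letter.a, Letter.b}
  complete := by intro x; cases x <;> simp

/-- The word `u^m` (the `m`-fold concatenation of `u`). -/
def wpow {α : Type} (u : List α) (m : ℕ) : List α :=
  (List.replicate m u).flatten

/-- `L_2lin = { a^{2n} b^{2n} : n ≥ 1 }`. -/
def L2lin : Set (List Letter) :=
  { w | ∃ n : ℕ, 1 ≤ n ∧
      w = List.replicate (2 * n) Letter.a ++ List.replicate (2 * n) Letter.b }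

namespace L2P
open Letter

abbrev W := List Letter

inductive St : Type where
  | c0 | i0 | i1 | h | k1 | q1 | q2 | p2 | ch | f
deriving DecidableEq

instance : Fintype St where
  elems := {.c0, .i0, .i1, .h, .k1, .q1, .q2, .p2, .ch, .f}
  complete := by intro x; cases x <;> simp

def tauER : Set W := {[a,a], [b,b]}
def tauC : Set W := {[a,a], [a,b]}

def tl : St → Set W
  | .q1 => tauC
  | .q2 => tauC
  | .c0 => tauER
  | .ch => tauER
  | _ => (∅ : Set W)

def delta : St → Letter → Set St
  | .i0, .a => {.i1}
  | .i1, .a => {.h}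
  | .h, .a => {.q1}
  | .h, .b => {.k1}
  | .k1, .b => {.f}
  | .q1, .b => {.q2}
  | .q2, .b => {.p2}
  | .p2, .a => {.ch}
  | _, _ => (∅ : Set St)

def endB : St → EndBehavior St
  | .c0 => .cont {.i0}
  | .ch => .cont {.h}
  | .f => .accept
  | _ => .reject

lemma exists_letter (p : Letter → Prop) : (∃ x, p x) ↔ p a ∨ p b :=
  ⟨fun ⟨x, hx⟩ => by cases x; exacts [Or.inl hx, Or.inr hx],
   fun h => h.elim (fun h => ⟨a, h⟩) (fun h => ⟨b, h⟩)⟩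

def M : RNFAwtw Letter St where
  init := {.c0}
  tl := tl
  delta := delta
  endB := endB
  tl_fin := by
    intro q
    cases q <;> simp [tl, tauER, tauC]
  code_ne := by
    intro q hq
    cases q <;> simp [tl, tauER, tauC] at hq
  prefix_code := by
    rintro q u hu v hv hpre
    cases q <;>
      simp only [tl, tauER, tauC, Set.mem_union, Set.mem_insert_iff, Set.mem_singleton_iff,
        Set.mem_empty_iff_false, Set.mem_setOf_eq, exists_letter, delta,
        Set.not_nonempty_empty, Set.singleton_nonempty, true_and, false_and,
        false_or, or_false] at hu hv
    case c0 =>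
      rcases hu with rfl | rfl <;> rcases hv with rfl | rfl <;>
        first | rfl | exact absurd hpre (by decide)
    case ch =>
      rcases hu with rfl | rfl <;> rcases hv with rfl | rfl <;>
        first | rfl | exact absurd hpre (by decide)
    case i0 => rw [hu, hv]
    case i1 => rw [hu, hv]
    case p2 => rw [hu, hv]
    case k1 => rw [hu, hv]
    case h =>
      rcases hu with rfl | rfl <;> rcases hv with rfl | rfl <;>
        first | rfl | exact absurd hpre (by decide)
    case q1 =>
      rcases hu with (rfl | rfl) | rfl <;> rcases hv with (rfl | rfl) | rfl <;>
        first | rfl | exact absurd hpre (by decide)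
    case q2 =>
      rcases hu with (rfl | rfl) | rfl <;> rcases hv with (rfl | rfl) | rfl <;>
        first | rfl | exact absurd hpre (by decide)
  tl_head := by
    rintro q t ht x hx hpre
    cases q <;>
      simp only [tl, tauER, tauC, Set.mem_insert_iff, Set.mem_singleton_iff,
        Set.mem_empty_iff_false] at ht <;>
      cases x <;>
        simp only [delta, Set.not_nonempty_empty, Set.singleton_nonempty] at hx <;>
      first
        | exact ht
        | (rcases ht with rfl | rfl <;> exact absurd hpre (by decide))

lemma M_det : M.Deterministic := by
  refine ⟨⟨.c0, rfl⟩, ?_, ?_⟩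
  · intro q x
    cases q <;> cases x <;>
      first
        | exact Set.subsingleton_empty
        | exact Set.subsingleton_singleton
  · intro q S hS
    cases q <;>
      first
        | · have h' : EndBehavior.cont ({St.i0} : Set St) = EndBehavior.cont S := hS
            injection h' with h'
            exact ⟨_, h'.symm⟩
        | · have h' : EndBehavior.cont ({St.h} : Set St) = EndBehavior.cont S := hS
            injection h' with h'
            exact ⟨_, h'.symm⟩
        | exact absurd hS (by simp [M, endB])

end L2P

namespace L2P
open Letter

def ra (n : ℕ) : W := List.replicate n a
def rb (n : ℕ) : W := List.replicate n b

lemma ra_succ (m : ℕ) : ra (m+1) = a :: ra m := List.replicate_succ ..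
lemma rb_succ (m : ℕ) : rb (m+1) = b :: rb m := List.replicate_succ ..
lemma ra_snoc (m : ℕ) : ra (m+1) = ra m ++ [a] := List.replicate_succ' ..
lemma rb_two (m : ℕ) : rb (m+2) = b :: b :: rb m := by
  rw [show m+2 = (m+1)+1 from rfl, rb_succ, rb_succ]
lemma ra_two (m : ℕ) : ra (m+2) = a :: a :: ra m := by
  rw [show m+2 = (m+1)+1 from rfl, ra_succ, ra_succ]

lemma instar_nil (S : Set W) : InStar S [] := ⟨[], by simp, rfl⟩

lemma instar_empty {w : W} (h : InStar (∅ : Set W) w) : w = [] := by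
  obtain ⟨l, hl, rfl⟩ := h
  cases l with
  | nil => rfl
  | cons u l => exact absurd (hl u (by simp)) (by simp)

lemma flatten_replicate (k : ℕ) (u : W) :
    (List.replicate k u).flatten = (List.replicate k u).flatten := rfl

lemma instar_aa (k : ℕ) : InStar tauC (ra (2*k)) := by
  refine ⟨List.replicate k [a,a], by simp [tauC], ?_⟩
  induction k with
  | zero => rfl
  | succ k ih =>
      rw [List.replicate_succ, List.flatten_cons, ih,
        show 2*(k+1) = (2*k)+2 by ring, ra_two]
      rfl

lemma instar_aab (k : ℕ) : InStar tauC (ra (2*k+1) ++ [b]) := by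
  obtain ⟨l, hl, hfl⟩ := instar_aa k
  refine ⟨l ++ [[a,b]], ?_, ?_⟩
  · intro u hu
    rcases List.mem_append.1 hu with h | h
    · exact hl u h
    · simp at h; subst h; simp [tauC]
  · rw [List.flatten_append, hfl]
    rw [show (2*k+1) = (2*k)+1 from rfl, ra_snoc]
    simp

lemma instar_er (k m : ℕ) : InStar tauER (ra (2*k) ++ rb (2*m)) := by
  refine ⟨List.replicate k [a,a] ++ List.replicate m [b,b], ?_, ?_⟩
  · intro u hu
    rcases List.mem_append.1 hu with h | h <;> simp at h <;> simp [tauER, h]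
  · rw [List.flatten_append]
    congr 1
    · induction k with
      | zero => rfl
      | succ k ih =>
          rw [List.replicate_succ, List.flatten_cons, ih,
            show 2*(k+1) = (2*k)+2 by ring, ra_two]
          rfl
    · induction m with
      | zero => rfl
      | succ m ih =>
          rw [List.replicate_succ, List.flatten_cons, ih,
            show 2*(m+1) = (2*m)+2 by ring, rb_two]
          rfl

def Acc (q : St) (w : W) : Prop :=
  Relation.ReflTransGen M.Step (Conf.state q w) Conf.accept

lemma M_tl : M.tl = tl := rfl
lemma M_delta : M.delta = delta := rfl

lemma step_read {q q' : St} {x : Letter} {u v : W}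
    (hu : InStar (tl q) u) (hq : q' ∈ delta q x) :
    M.Step (Conf.state q (u ++ x :: v)) (Conf.state q' (u ++ v)) :=
  RNFAwtw.Step.read hu hq

lemma acc_f : Acc .f [] :=
  Relation.ReflTransGen.single (RNFAwtw.Step.haltAccept (instar_nil _) rfl)

lemma acc_k1 : Acc .k1 [b] := by
  have s : M.Step (Conf.state .k1 ([] ++ b :: [])) (Conf.state .f ([] ++ [])) :=
    step_read (instar_nil _) rfl
  exact Relation.ReflTransGen.head s acc_f

lemma acc_h : ∀ k, Acc .h (ra (2*k) ++ rb (2*k+2)) := by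
  intro k
  induction k with
  | zero =>
      have s : M.Step (Conf.state .h ([] ++ b :: [b])) (Conf.state .k1 ([] ++ [b])) :=
        step_read (instar_nil _) rfl
      have e : ra 0 ++ rb 2 = [] ++ b :: [b] := rfl
      rw [show (2*0 : ℕ) = 0 from rfl, show (2*0+2 : ℕ) = 2 from rfl, e]
      exact Relation.ReflTransGen.head s acc_k1
  | succ k ih =>
      -- step 1 : h reads a
      have e1 : ra (2*(k+1)) ++ rb (2*(k+1)+2)
          = [] ++ a :: (ra (2*k+1) ++ rb (2*k+4)) := by
        rw [show 2*(k+1)+2 = 2*k+4 by ring, show 2*(k+1) = (2*k+1)+1 by ring, ra_succ]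
        rfl
      have s1 : M.Step (Conf.state .h ([] ++ a :: (ra (2*k+1) ++ rb (2*k+4))))
          (Conf.state .q1 ([] ++ (ra (2*k+1) ++ rb (2*k+4)))) :=
        step_read (instar_nil _) rfl
      -- step 2 : q1 reads the second b
      have e2 : ([] : W) ++ (ra (2*k+1) ++ rb (2*k+4))
          = (ra (2*k+1) ++ [b]) ++ b :: rb (2*k+2) := by
        simp [rb_two, List.append_assoc]
      have s2 : M.Step (Conf.state .q1 ((ra (2*k+1) ++ [b]) ++ b :: rb (2*k+2)))
          (Conf.state .q2 ((ra (2*k+1) ++ [b]) ++ rb (2*k+2))) :=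
        step_read (instar_aab k) rfl
      -- step 3 : q2 reads the second b of the rest
      have e3 : (ra (2*k+1) ++ [b]) ++ rb (2*k+2)
          = (ra (2*k+1) ++ [b]) ++ b :: rb (2*k+1) := by
        rw [show 2*k+2 = (2*k+1)+1 by ring, rb_succ]
      have s3 : M.Step (Conf.state .q2 ((ra (2*k+1) ++ [b]) ++ b :: rb (2*k+1)))
          (Conf.state .p2 ((ra (2*k+1) ++ [b]) ++ rb (2*k+1))) :=
        step_read (instar_aab k) rfl
      -- step 4 : p2 reads the front a
      have e4 : (ra (2*k+1) ++ [b]) ++ rb (2*k+1)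
          = [] ++ a :: (ra (2*k) ++ rb (2*k+2)) := by
        rw [show 2*k+2 = (2*k+1)+1 by ring, rb_succ, ra_succ]
        simp [show (2*k+1+1) = (2*k)+2 from rfl, rb_two]
      have s4 : M.Step (Conf.state .p2 ([] ++ a :: (ra (2*k) ++ rb (2*k+2))))
          (Conf.state .ch ([] ++ (ra (2*k) ++ rb (2*k+2)))) :=
        step_read (instar_nil _) rfl
      -- step 5 : ch check and continue in h
      have s5 : M.Step (Conf.state .ch (ra (2*k) ++ rb (2*k+2)))
          (Conf.state .h (ra (2*k) ++ rb (2*k+2))) := by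
        refine RNFAwtw.Step.goOn ?_ rfl rfl
        have := instar_er k (k+1)
        rwa [show 2*(k+1) = 2*k+2 by ring] at this
      rw [e1]
      refine Relation.ReflTransGen.head s1 ?_
      rw [show ([] : W) ++ (ra (2*k+1) ++ rb (2*k+4)) = _ from e2]
      refine Relation.ReflTransGen.head s2 ?_
      rw [e3]
      refine Relation.ReflTransGen.head s3 ?_
      rw [e4]
      refine Relation.ReflTransGen.head s4 ?_
      exact Relation.ReflTransGen.head s5 ih

lemma complete (n : ℕ) (hn : 1 ≤ n) : Acc .c0 (ra (2*n) ++ rb (2*n)) := by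
  obtain ⟨k, rfl⟩ : ∃ k, n = k + 1 := ⟨n - 1, by omega⟩
  have s0 : M.Step (Conf.state .c0 (ra (2*(k+1)) ++ rb (2*(k+1))))
      (Conf.state .i0 (ra (2*(k+1)) ++ rb (2*(k+1)))) :=
    RNFAwtw.Step.goOn (instar_er (k+1) (k+1)) rfl rfl
  have e1 : ra (2*(k+1)) ++ rb (2*(k+1))
      = [] ++ a :: ([] ++ a :: (ra (2*k) ++ rb (2*k+2))) := by
    rw [show 2*(k+1) = (2*k)+2 by ring, ra_two]
    rfl
  have s1 : M.Step (Conf.state .i0 ([] ++ a :: ([] ++ a :: (ra (2*k) ++ rb (2*k+2)))))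
      (Conf.state .i1 ([] ++ ([] ++ a :: (ra (2*k) ++ rb (2*k+2))))) :=
    step_read (instar_nil _) rfl
  have s2 : M.Step (Conf.state .i1 ([] ++ a :: (ra (2*k) ++ rb (2*k+2))))
      (Conf.state .h ([] ++ (ra (2*k) ++ rb (2*k+2)))) :=
    step_read (instar_nil _) rfl
  refine Relation.ReflTransGen.head s0 ?_
  rw [e1]
  refine Relation.ReflTransGen.head s1 ?_
  refine Relation.ReflTransGen.head s2 ?_
  exact acc_h k

end L2P

namespace L2P
open Letter

lemma not_reaches_reject : ¬ Relation.ReflTransGen M.Step Conf.reject Conf.accept := by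
  intro hr
  rcases Relation.ReflTransGen.cases_head hr with h | ⟨c, hs, _⟩
  · cases h
  · cases hs

lemma acc_step {q : St} {w : W} (h : Acc q w) :
    ∃ c, M.Step (Conf.state q w) c ∧ Relation.ReflTransGen M.Step c Conf.accept := by
  rcases Relation.ReflTransGen.cases_head h with h | hc
  · exact absurd h (by simp)
  · exact hc

lemma acc_f_inv {w : W} (h : Acc .f w) : w = [] := by
  obtain ⟨c, hs, hr⟩ := acc_step h
  cases hs with
  | read hu hq => cases ‹Letter› <;> simp [M_delta, delta] at hq
  | stuck hu hd hn => exact absurd hr not_reaches_reject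
  | haltAccept hw he => exact instar_empty hw
  | haltReject hw he => exact absurd hr not_reaches_reject
  | goOn hw he hq => exact absurd he (by simp [M, endB])

lemma acc_k1_inv {w : W} (h : Acc .k1 w) : w = [b] := by
  obtain ⟨c, hs, hr⟩ := acc_step h
  cases hs with
  | @read q q' x u v hu hq =>
      obtain rfl := instar_empty hu
      cases x <;> simp only [M_delta, delta, Set.mem_empty_iff_false,
        Set.mem_singleton_iff] at hq
      subst hq
      have := acc_f_inv hr
      simp at this
      simp [this]
  | stuck hu hd hn => exact absurd hr not_reaches_reject
  | haltAccept hw he => exact absurd he (by simp [M, endB])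
  | haltReject hw he => exact absurd hr not_reaches_reject
  | goOn hw he hq => exact absurd he (by simp [M, endB])

lemma acc_p2_inv {w : W} (h : Acc .p2 w) : ∃ v, w = a :: v ∧ Acc .ch v := by
  obtain ⟨c, hs, hr⟩ := acc_step h
  cases hs with
  | @read q q' x u v hu hq =>
      obtain rfl := instar_empty hu
      cases x <;> simp only [M_delta, delta, Set.mem_empty_iff_false,
        Set.mem_singleton_iff] at hq
      subst hq
      exact ⟨v, rfl, hr⟩
  | stuck hu hd hn => exact absurd hr not_reaches_reject
  | haltAccept hw he => exact absurd he (by simp [M, endB])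
  | haltReject hw he => exact absurd hr not_reaches_reject
  | goOn hw he hq => exact absurd he (by simp [M, endB])

lemma acc_i0_inv {w : W} (h : Acc .i0 w) : ∃ v, w = a :: v ∧ Acc .i1 v := by
  obtain ⟨c, hs, hr⟩ := acc_step h
  cases hs with
  | @read q q' x u v hu hq =>
      obtain rfl := instar_empty hu
      cases x <;> simp only [M_delta, delta, Set.mem_empty_iff_false,
        Set.mem_singleton_iff] at hq
      subst hq
      exact ⟨v, rfl, hr⟩
  | stuck hu hd hn => exact absurd hr not_reaches_reject
  | haltAccept hw he => exact absurd he (by simp [M, endB])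
  | haltReject hw he => exact absurd hr not_reaches_reject
  | goOn hw he hq => exact absurd he (by simp [M, endB])

lemma acc_i1_inv {w : W} (h : Acc .i1 w) : ∃ v, w = a :: v ∧ Acc .h v := by
  obtain ⟨c, hs, hr⟩ := acc_step h
  cases hs with
  | @read q q' x u v hu hq =>
      obtain rfl := instar_empty hu
      cases x <;> simp only [M_delta, delta, Set.mem_empty_iff_false,
        Set.mem_singleton_iff] at hq
      subst hq
      exact ⟨v, rfl, hr⟩
  | stuck hu hd hn => exact absurd hr not_reaches_reject
  | haltAccept hw he => exact absurd he (by simp [M, endB])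
  | haltReject hw he => exact absurd hr not_reaches_reject
  | goOn hw he hq => exact absurd he (by simp [M, endB])

lemma acc_h_inv {w : W} (h : Acc .h w) :
    (∃ v, w = a :: v ∧ Acc .q1 v) ∨ (∃ v, w = b :: v ∧ Acc .k1 v) := by
  obtain ⟨c, hs, hr⟩ := acc_step h
  cases hs with
  | @read q q' x u v hu hq =>
      obtain rfl := instar_empty hu
      cases x <;> simp only [M_delta, delta, Set.mem_singleton_iff] at hq <;>
        subst hq
      · exact Or.inl ⟨v, rfl, hr⟩
      · exact Or.inr ⟨v, rfl, hr⟩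
  | stuck hu hd hn => exact absurd hr not_reaches_reject
  | haltAccept hw he => exact absurd he (by simp [M, endB])
  | haltReject hw he => exact absurd hr not_reaches_reject
  | goOn hw he hq => exact absurd he (by simp [M, endB])

lemma acc_q1_inv {w : W} (h : Acc .q1 w) :
    ∃ u v, InStar tauC u ∧ w = u ++ b :: v ∧ Acc .q2 (u ++ v) := by
  obtain ⟨c, hs, hr⟩ := acc_step h
  cases hs with
  | @read q q' x u v hu hq =>
      cases x <;> simp only [M_delta, delta, Set.mem_empty_iff_false,
        Set.mem_singleton_iff] at hq
      subst hq
      exact ⟨u, v, hu, rfl, hr⟩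
  | stuck hu hd hn => exact absurd hr not_reaches_reject
  | haltAccept hw he => exact absurd he (by simp [M, endB])
  | haltReject hw he => exact absurd hr not_reaches_reject
  | goOn hw he hq => exact absurd he (by simp [M, endB])

lemma acc_q2_inv {w : W} (h : Acc .q2 w) :
    ∃ u v, InStar tauC u ∧ w = u ++ b :: v ∧ Acc .p2 (u ++ v) := by
  obtain ⟨c, hs, hr⟩ := acc_step h
  cases hs with
  | @read q q' x u v hu hq =>
      cases x <;> simp only [M_delta, delta, Set.mem_empty_iff_false,
        Set.mem_singleton_iff] at hq
      subst hq
      exact ⟨u, v, hu, rfl, hr⟩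
  | stuck hu hd hn => exact absurd hr not_reaches_reject
  | haltAccept hw he => exact absurd he (by simp [M, endB])
  | haltReject hw he => exact absurd hr not_reaches_reject
  | goOn hw he hq => exact absurd he (by simp [M, endB])

lemma acc_ch_inv {w : W} (h : Acc .ch w) : InStar tauER w ∧ Acc .h w := by
  obtain ⟨c, hs, hr⟩ := acc_step h
  cases hs with
  | @read q q' x u v hu hq =>
      cases x <;> simp only [M_delta, delta, Set.mem_empty_iff_false] at hq
  | stuck hu hd hn => exact absurd hr not_reaches_reject
  | haltAccept hw he => exact absurd he (by simp [M, endB])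
  | haltReject hw he => exact absurd he (by simp [M, endB])
  | @goOn q q' w' S hw he hq =>
      have h' : EndBehavior.cont ({St.h} : Set St) = EndBehavior.cont S := he
      injection h' with h'
      rw [← h', Set.mem_singleton_iff] at hq
      subst hq
      exact ⟨hw, hr⟩

lemma acc_c0_inv {w : W} (h : Acc .c0 w) : InStar tauER w ∧ Acc .i0 w := by
  obtain ⟨c, hs, hr⟩ := acc_step h
  cases hs with
  | @read q q' x u v hu hq =>
      cases x <;> simp only [M_delta, delta, Set.mem_empty_iff_false] at hq
  | stuck hu hd hn => exact absurd hr not_reaches_reject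
  | haltAccept hw he => exact absurd he (by simp [M, endB])
  | haltReject hw he => exact absurd he (by simp [M, endB])
  | @goOn q q' w' S hw he hq =>
      have h' : EndBehavior.cont ({St.i0} : Set St) = EndBehavior.cont S := he
      injection h' with h'
      rw [← h', Set.mem_singleton_iff] at hq
      subst hq
      exact ⟨hw, hr⟩

end L2P

namespace L2P
open Letter

lemma tauC_flatten_no_b : ∀ (l : List W), (∀ u ∈ l, u ∈ tauC) →
    ∀ (v : W) (m : ℕ), l.flatten ++ v = rb m → l.flatten = [] ∧ v = rb m := by
  intro l hl v m he
  cases l with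
  | nil => exact ⟨rfl, by simpa using he⟩
  | cons u l =>
      have hu := hl u (by simp)
      rcases hu with rfl | rfl <;>
      · rw [List.flatten_cons] at he
        cases m with
        | zero => simp [rb] at he
        | succ m => rw [rb_succ] at he; simp at he

lemma tauC_flatten_shape :
    ∀ (l : List W), (∀ u ∈ l, u ∈ tauC) → ∀ (v : W) (k m : ℕ),
    l.flatten ++ v = ra (2*k+1) ++ rb m →
    (∃ t t', t + t' = k ∧ l.flatten = ra (2*t) ∧ v = ra (2*t'+1) ++ rb m) ∨
    (l.flatten = ra (2*k+1) ++ [b] ∧ ∃ m', m = m' + 1 ∧ v = rb m') := by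
  intro l
  induction l with
  | nil =>
      intro hl v k m he
      exact Or.inl ⟨0, k, by omega, rfl, by simpa using he⟩
  | cons u l ih =>
      intro hl v k m he
      have hu := hl u (by simp)
      rw [List.flatten_cons] at he
      rcases hu with rfl | rfl
      · -- u = [a,a]
        cases k with
        | zero =>
            rw [show (2*0+1 : ℕ) = 1 from rfl] at he
            simp only [ra, List.replicate, List.append_assoc, List.cons_append,
              List.nil_append, List.singleton_append, List.cons.injEq] at he
            obtain ⟨-, he⟩ := he
            cases m with
            | zero => simp [rb] at he
            | succ m => rw [rb_succ] at he; simp at he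
        | succ j =>
            rw [show 2*(j+1)+1 = (2*j+1)+2 by ring, ra_two] at he
            simp only [List.cons_append, List.cons.injEq, true_and] at he
            rcases ih (fun u hu => hl u (by simp [hu])) v j m he with
              ⟨t, t', htt, hfl, hv⟩ | ⟨hfl, m', hm, hv⟩
            · refine Or.inl ⟨t+1, t', by omega, ?_, hv⟩
              rw [List.flatten_cons, hfl, show 2*(t+1) = (2*t)+2 by ring, ra_two]
              rfl
            · refine Or.inr ⟨?_, m', hm, hv⟩
              rw [List.flatten_cons, hfl, show 2*(j+1)+1 = (2*j+1)+2 by ring, ra_two]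
              rfl
      · -- u = [a,b]
        cases k with
        | zero =>
            rw [show (2*0+1 : ℕ) = 1 from rfl] at he
            simp only [ra, List.replicate, List.append_assoc, List.cons_append,
              List.nil_append, List.singleton_append, List.cons.injEq] at he
            obtain ⟨-, he⟩ := he
            cases m with
            | zero => simp [rb] at he
            | succ m =>
                rw [rb_succ] at he
                simp only [List.cons.injEq, true_and] at he
                obtain ⟨hfl, hv⟩ := tauC_flatten_no_b l
                  (fun u hu => hl u (by simp [hu])) v m he
                refine Or.inr ⟨?_, m, rfl, hv⟩
                rw [List.flatten_cons, hfl]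
                rfl
        | succ j =>
            rw [show 2*(j+1)+1 = (2*j+1)+2 by ring, ra_two] at he
            simp at he
  
lemma tauC_flatten_shape₂ :
    ∀ (l : List W), (∀ u ∈ l, u ∈ tauC) → ∀ (v : W) (t : ℕ) (y : W),
    l.flatten ++ v = ra (2*t) ++ (b :: y) →
    ∃ s s', s + s' = t ∧ l.flatten = ra (2*s) ∧ v = ra (2*s') ++ (b :: y) := by
  intro l
  induction l with
  | nil =>
      intro hl v t y he
      exact ⟨0, t, by omega, rfl, by simpa using he⟩
  | cons u l ih =>
      intro hl v t y he
      have hu := hl u (by simp)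
      rw [List.flatten_cons] at he
      rcases hu with rfl | rfl
      · cases t with
        | zero => simp [ra] at he
        | succ j =>
            rw [show 2*(j+1) = (2*j)+2 by ring, ra_two] at he
            simp only [List.cons_append, List.cons.injEq, true_and] at he
            obtain ⟨s, s', hss, hfl, hv⟩ :=
              ih (fun u hu => hl u (by simp [hu])) v j y he
            refine ⟨s+1, s', by omega, ?_, hv⟩
            rw [List.flatten_cons, hfl, show 2*(s+1) = (2*s)+2 by ring, ra_two]
            rfl
      · cases t with
        | zero => simp [ra] at he
        | succ j =>
            rw [show 2*(j+1) = (2*j)+2 by ring, ra_two] at he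
            simp at he

lemma er_no_oddrun : ∀ (l : List W), (∀ u ∈ l, u ∈ tauER) → ∀ (s : ℕ) (y : W),
    l.flatten = ra (2*s+1) ++ (b :: y) → False := by
  intro l
  induction l with
  | nil =>
      intro hl s y he
      rw [show 2*s+1 = (2*s)+1 from rfl, ra_succ] at he
      simp at he
  | cons u l ih =>
      intro hl s y he
      have hu := hl u (by simp)
      rw [List.flatten_cons] at he
      rcases hu with rfl | rfl
      · cases s with
        | zero =>
            rw [show (2*0+1 : ℕ) = 1 from rfl] at he
            simp [ra] at he
        | succ j =>
            rw [show 2*(j+1)+1 = (2*j+1)+2 by ring, ra_two] at he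
            simp only [List.cons_append, List.cons.injEq, true_and] at he
            exact ih (fun u hu => hl u (by simp [hu])) j y he
      · rw [show 2*s+1 = (2*s)+1 from rfl, ra_succ] at he
        simp at he

lemma er_peel_two {w : W} (h : InStar tauER (a :: a :: w)) : InStar tauER w := by
  obtain ⟨l, hl, hfl⟩ := h
  cases l with
  | nil => simp at hfl
  | cons u l =>
      have hu := hl u (by simp)
      rw [List.flatten_cons] at hfl
      rcases hu with rfl | rfl
      · simp only [List.cons_append, List.nil_append, List.cons.injEq, true_and] at hfl
        exact ⟨l, fun u hu => hl u (by simp [hu]), hfl⟩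
      · simp at hfl

end L2P

namespace L2P
open Letter

lemma acc_h_char : ∀ (N : ℕ) (w : W), w.length ≤ N → InStar tauER w → Acc .h w →
    ∃ k, w = ra (2*k) ++ rb (2*k+2) := by
  intro N
  induction N with
  | zero =>
      intro w hlen her hacc
      rcases acc_h_inv hacc with ⟨v, rfl, -⟩ | ⟨v, rfl, -⟩ <;> simp at hlen
  | succ N ih =>
      intro w hlen her hacc
      rcases acc_h_inv hacc with ⟨w1, rfl, hq1⟩ | ⟨v, rfl, hk1⟩
      · obtain ⟨u1, v1, hu1, rfl, hq2⟩ := acc_q1_inv hq1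
        obtain ⟨u2, v2, hu2, he2, hp2⟩ := acc_q2_inv hq2
        obtain ⟨w4, he3, hch⟩ := acc_p2_inv hp2
        obtain ⟨her4, hh4⟩ := acc_ch_inv hch
        have hl2 := congrArg List.length he2
        have hl3 := congrArg List.length he3
        simp only [List.length_append, List.length_cons] at hl2 hl3 hlen
        have hlen4 : w4.length ≤ N := by omega
        obtain ⟨k, hw4⟩ := ih w4 hlen4 her4 hh4
        subst hw4
        have he3' : u2 ++ v2 = ra (2*k+1) ++ rb (2*k+2) := by
          rw [he3, show 2*k+1 = (2*k)+1 from rfl, ra_succ]; rfl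
        obtain ⟨l2, hl2', hfl2⟩ := hu2
        rw [← hfl2] at he3'
        rcases tauC_flatten_shape l2 hl2' v2 k (2*k+2) he3' with
          ⟨t, t', htt, hfl, hv2⟩ | ⟨hfl, m', hm', hv2⟩
        · -- u2 is an even block of a's: leads to an odd a-run in w, contra ER
          have hu2e : u2 = ra (2*t) := hfl2.symm.trans hfl
          have he2' : u1 ++ v1 = ra (2*t) ++ (b :: (ra (2*t'+1) ++ rb (2*k+2))) := by
            rw [he2, hu2e, hv2]
          obtain ⟨l1, hl1', hfl1⟩ := hu1
          rw [← hfl1] at he2'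
          obtain ⟨s, s', hss, hfl1e, hv1⟩ :=
            tauC_flatten_shape₂ l1 hl1' v1 t _ he2'
          have hu1e : u1 = ra (2*s) := hfl1.symm.trans hfl1e
          exfalso
          obtain ⟨l, hl, hfl⟩ := her
          refine er_no_oddrun l hl s v1 ?_
          rw [hfl, hu1e, show 2*s+1 = (2*s)+1 from rfl, ra_succ]
          rfl
        · -- u2 = ra (2k+1) ++ [b]
          have hu2e : u2 = ra (2*k+1) ++ [b] := hfl2.symm.trans hfl
          obtain rfl : m' = 2*k+1 := by omega
          have he2' : u1 ++ v1 = ra (2*k+1) ++ rb (2*k+3) := by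
            rw [he2, hu2e, hv2, show 2*k+3 = (2*k+1)+2 from rfl, rb_two]
            simp
          obtain ⟨l1, hl1', hfl1⟩ := hu1
          rw [← hfl1] at he2'
          rcases tauC_flatten_shape l1 hl1' v1 k (2*k+3) he2' with
            ⟨t, t', htt, hfl1e, hv1⟩ | ⟨hfl1e, m'', hm'', hv1⟩
          · have hu1e : u1 = ra (2*t) := hfl1.symm.trans hfl1e
            exfalso
            obtain ⟨l, hl, hfl⟩ := her
            refine er_no_oddrun l hl t v1 ?_
            rw [hfl, hu1e, show 2*t+1 = (2*t)+1 from rfl, ra_succ]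
            rfl
          · have hu1e : u1 = ra (2*k+1) ++ [b] := hfl1.symm.trans hfl1e
            obtain rfl : m'' = 2*k+2 := by omega
            refine ⟨k+1, ?_⟩
            rw [hu1e, hv1, show 2*(k+1)+2 = (2*k+2)+2 by ring,
              show 2*(k+1) = (2*k)+2 by ring, ra_two, rb_two,
              show 2*k+2 = (2*k)+2 from rfl, rb_two]
            simp [show 2*k+1 = (2*k)+1 from rfl, ra_succ, rb_two]
      · obtain rfl := acc_k1_inv hk1
        exact ⟨0, rfl⟩

lemma sound {w : W} (hacc : Acc .c0 w) : w ∈ L2lin := by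
  obtain ⟨her, hi0⟩ := acc_c0_inv hacc
  obtain ⟨w1, rfl, hi1⟩ := acc_i0_inv hi0
  obtain ⟨w2, rfl, hh⟩ := acc_i1_inv hi1
  obtain ⟨k, rfl⟩ := acc_h_char w2.length w2 le_rfl (er_peel_two her) hh
  refine ⟨k+1, by omega, ?_⟩
  show a :: a :: (ra (2*k) ++ rb (2*k+2))
      = List.replicate (2*(k+1)) a ++ List.replicate (2*(k+1)) b
  rw [show 2*(k+1) = (2*k)+2 by ring, ← ra.eq_def, ← rb.eq_def,
    show (2*k)+2 = 2*k+2 from rfl, ra_two]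
  rfl

end L2P

/-- The language `L_2lin = { a^{2n} b^{2n} : n ≥ 1 }` is accepted by a
repetitive deterministic finite automaton with translucent words. -/
theorem L2lin_accepted_by_RDFAwtw : AcceptedByRDFAwtw L2lin := by
  refine ⟨L2P.St, inferInstance, L2P.M, L2P.M_det, ?_⟩
  ext w
  constructor
  · rintro ⟨q0, hq0, hr⟩
    have hq : q0 = .c0 := hq0
    subst hq
    exact L2P.sound hr
  · rintro ⟨n, hn, rfl⟩
    exact ⟨.c0, rfl, L2P.complete n hn⟩
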